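/- arXiv:2508.05409 — 2 statements merged into one kernel-verified Lean document; each statement's English description precedes it below -/
import Mathlib

section
/- For an ensemble of M = 2k+1 independent binary voters, each correct with probability p > 1/2 (i.i.d. Bernoulli), the probability that the majority vote is correct is at least p. More precisely, the probability that at least k+1 out of 2k+1 voters are correct is ≥ p for all k ≥ 0. -/
open Finset

/-- Tail sum of the binomial distribution. -/
def majTsum (p : ℝ) (n m : ℕ) : ℝ :=
  ∑ j ∈ Finset.Icc m n, (Nat.choose n j : ℝ) * p ^ j * (1 - p) ^ (n - j)

lemma majT_drop (p : ℝ) (n m : ℕ) (h : m ≤ n) :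
    majTsum p n m
      = (Nat.choose n m : ℝ) * p ^ m * (1 - p) ^ (n - m) + majTsum p n (m+1) := by
  have hins : Finset.Icc m n = insert m (Finset.Icc (m+1) n) := by
    ext x; simp [Finset.mem_Icc]; omega
  rw [majTsum, hins, Finset.sum_insert (by simp)]
  rfl

lemma majT_succ (p : ℝ) (n m : ℕ) :
    majTsum p (n+1) (m+1)
      = majTsum p n (m+1) + (Nat.choose n m : ℝ) * p ^ (m+1) * (1 - p) ^ (n - m) := by
  unfold majTsum
  have hmap : Finset.Icc (m+1) (n+1) = (Finset.Icc m n).map (addRightEmbedding 1) := by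
    rw [Finset.map_add_right_Icc]
  rw [hmap, Finset.sum_map]
  simp only [addRightEmbedding_apply, Nat.choose_succ_succ, Nat.succ_sub_succ]
  push_cast
  rw [show (∑ j ∈ Finset.Icc m n,
        ((Nat.choose n j : ℝ) + Nat.choose n (j+1)) * p ^ (j+1) * (1-p) ^ (n-j))
      = (∑ j ∈ Finset.Icc m n, (Nat.choose n j : ℝ) * p ^ (j+1) * (1-p) ^ (n-j))
        + ∑ j ∈ Finset.Icc m n, (Nat.choose n (j+1) : ℝ) * p ^ (j+1) * (1-p) ^ (n-j) by
      rw [← Finset.sum_add_distrib]; exact Finset.sum_congr rfl fun j _ => by ring]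
  have h2 : (∑ j ∈ Finset.Icc m n, (Nat.choose n (j+1) : ℝ) * p ^ (j+1) * (1-p) ^ (n-j))
      = ∑ i ∈ Finset.Icc (m+1) (n+1), (Nat.choose n i : ℝ) * p ^ i * (1-p) ^ (n+1-i) := by
    rw [hmap, Finset.sum_map]
    simp only [addRightEmbedding_apply, Nat.succ_sub_succ]
  rw [h2]
  rcases le_or_gt m n with hmn | hmn
  · -- split top of the Icc (m+1) (n+1) sum; the top term vanishes
    rw [Finset.sum_Icc_succ_top (by omega : m+1 ≤ n+1)]
    rw [Nat.choose_succ_self]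
    -- now both remaining sums are over Icc (m+1) n; also split bottom of first sum
    have hq : ∀ i ∈ Finset.Icc (m+1) n, (Nat.choose n i : ℝ) * p ^ i * (1-p) ^ (n+1-i)
        = (1-p) * ((Nat.choose n i : ℝ) * p ^ i * (1-p) ^ (n-i)) := by
      intro i hi
      simp only [Finset.mem_Icc] at hi
      rw [show n+1-i = (n-i)+1 by omega]
      ring
    rw [Finset.sum_congr rfl hq]
    have hfirst : (∑ j ∈ Finset.Icc m n, (Nat.choose n j : ℝ) * p ^ (j+1) * (1-p) ^ (n-j))
        = p * majTsum p n m := by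
      unfold majTsum
      rw [Finset.mul_sum]
      exact Finset.sum_congr rfl fun j _ => by ring
    rw [hfirst, majT_drop p n m hmn]
    unfold majTsum
    rw [← Finset.mul_sum]
    set S := ∑ j ∈ Finset.Icc (m+1) n, (Nat.choose n j : ℝ) * p ^ j * (1-p) ^ (n-j)
    push_cast
    ring
  · -- degenerate case: m > n, everything is zero
    have e1 : Finset.Icc (m+1) n = (∅ : Finset ℕ) := by
      apply Finset.Icc_eq_empty; omega
    have e2 : Finset.Icc m n = (∅ : Finset ℕ) := by
      apply Finset.Icc_eq_empty; omega
    have e3 : Finset.Icc (m+1) (n+1) = (∅ : Finset ℕ) := by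
      apply Finset.Icc_eq_empty; omega
    rw [e1, e2, e3]
    simp [Nat.choose_eq_zero_of_lt hmn]

lemma maj_step (p : ℝ) (k : ℕ) :
    majTsum p (2*k+3) (k+2)
      = majTsum p (2*k+1) (k+1)
        + (Nat.choose (2*k+1) k : ℝ) * p^(k+1) * (1-p)^(k+1) * (2*p - 1) := by
  have s1 : majTsum p (2*k+3) (k+2)
      = majTsum p (2*k+2) (k+2)
        + (Nat.choose (2*k+2) (k+1) : ℝ) * p ^ (k+2) * (1-p) ^ (k+1) := by
    have := majT_succ p (2*k+2) (k+1)
    rw [show 2*k+2+1 = 2*k+3 by ring, show 2*k+2-(k+1) = k+1 by omega] at this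
    exact this
  have s2 : majTsum p (2*k+2) (k+2)
      = majTsum p (2*k+1) (k+2)
        + (Nat.choose (2*k+1) (k+1) : ℝ) * p ^ (k+2) * (1-p) ^ k := by
    have := majT_succ p (2*k+1) (k+1)
    rw [show 2*k+1+1 = 2*k+2 by ring, show 2*k+1-(k+1) = k by omega] at this
    exact this
  have s3 : majTsum p (2*k+1) (k+1)
      = (Nat.choose (2*k+1) (k+1) : ℝ) * p ^ (k+1) * (1-p) ^ k
        + majTsum p (2*k+1) (k+2) := by
    have := majT_drop p (2*k+1) (k+1) (by omega)
    rw [show 2*k+1-(k+1) = k by omega, show k+1+1 = k+2 by ring] at this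
    exact this
  have hch1 : Nat.choose (2*k+1) (k+1) = Nat.choose (2*k+1) k := by
    rw [← Nat.choose_symm (by omega : k+1 ≤ 2*k+1)]
    congr 1; omega
  have hch2 : (Nat.choose (2*k+2) (k+1) : ℝ) = 2 * Nat.choose (2*k+1) k := by
    rw [show 2*k+2 = (2*k+1)+1 by ring, Nat.choose_succ_succ, hch1]
    push_cast; ring
  rw [s1, s2, s3, hch1, hch2]
  ring

/-- For an ensemble of `M = 2k+1` i.i.d. binary voters each correct with probability
`p > 1/2`, the probability that at least `k+1` out of `2k+1` voters are correct,
`∑_{j=k+1}^{2k+1} C(2k+1, j) p^j (1-p)^{2k+1-j}`, is at least `p`. -/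
theorem majority_vote_probability_ge (k : ℕ) (p : ℝ) (hp : 1/2 < p) (hp1 : p ≤ 1) :
    p ≤ ∑ j ∈ Finset.Icc (k+1) (2*k+1),
      (Nat.choose (2*k+1) j : ℝ) * p ^ j * (1 - p) ^ (2*k+1 - j) := by
  have key : ∀ n : ℕ, p ≤ majTsum p (2*n+1) (n+1) := by
    intro n
    induction n with
    | zero => simp [majTsum]
    | succ n ih =>
      have heq : majTsum p (2*(n+1)+1) (n+1+1) = majTsum p (2*n+3) (n+2) := by
        ring_nf
      rw [heq, maj_step p n]
      have h0 : (0:ℝ) ≤ p := by linarith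
      have h1 : (0:ℝ) ≤ 1 - p := by linarith
      have hnn : 0 ≤ (Nat.choose (2*n+1) n : ℝ) * p^(n+1) * (1-p)^(n+1) * (2*p - 1) := by
        apply mul_nonneg
        · apply mul_nonneg
          · apply mul_nonneg (Nat.cast_nonneg _) (pow_nonneg h0 _)
          · exact pow_nonneg h1 _
        · linarith
      linarith
  exact key k
end

section
/- Under the hypotheses of projected gradient descent on an L-smooth function φ over a compact convex set C with step size α ∈ (0, 2/L), every accumulation point x* of the iterate sequence (x_t) is a stationary point of φ on C, i.e., x* = Proj_C(x* − α ∇φ(x*)). -/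
open scoped NNReal
open InnerProductSpace intervalIntegral

variable {E : Type*} [NormedAddCommGroup E] [InnerProductSpace ℝ E] [CompleteSpace E]

/-- Descent lemma for L-smooth functions. -/
theorem my_descent (φ : E → ℝ) (L : ℝ≥0) (hdiff : Differentiable ℝ φ)
    (hlip : LipschitzWith L (gradient φ)) (x y : E) :
    φ y ≤ φ x + ⟪gradient φ x, y - x⟫_ℝ + L / 2 * ‖y - x‖ ^ 2 := by
  set v := y - x with hv
  set g := gradient φ with hg
  have hcont : Continuous g := hlip.continuous
  have hline : ∀ t : ℝ, HasDerivAt (fun s : ℝ => φ (x + s • v)) (⟪g (x + t • v), v⟫_ℝ) t := by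
    intro t
    have h1 : HasDerivAt (fun s : ℝ => x + s • v) v t := by
      simpa using ((hasDerivAt_id t).smul_const v).const_add x
    have h2 : HasFDerivAt φ (toDual ℝ E (g (x + t • v))) (x + t • v) :=
      (hdiff (x + t • v)).hasGradientAt
    convert h2.comp_hasDerivAt t h1 using 1
    · rfl
    · rfl
    · rfl
    · simp [toDual_apply_apply]
  have hderiv_cont : Continuous fun t : ℝ => ⟪g (x + t • v), v⟫_ℝ := by
    exact (hcont.comp (continuous_const.add (continuous_id.smul continuous_const))).inner
      continuous_const
  have hFTC : ∫ t in (0:ℝ)..1, ⟪g (x + t • v), v⟫_ℝ = φ (x + (1:ℝ) • v) - φ (x + (0:ℝ) • v) := by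
    exact intervalIntegral.integral_eq_sub_of_hasDerivAt (fun t _ => hline t)
      (hderiv_cont.intervalIntegrable 0 1)
  have hFTC' : φ y - φ x = ∫ t in (0:ℝ)..1, ⟪g (x + t • v), v⟫_ℝ := by
    rw [hFTC]; simp [hv]
  have hbound : ∀ t ∈ Set.Icc (0:ℝ) 1,
      ⟪g (x + t • v), v⟫_ℝ ≤ ⟪g x, v⟫_ℝ + (L : ℝ) * ‖v‖ ^ 2 * t := by
    intro t ht
    have h1 : ⟪g (x + t • v), v⟫_ℝ - ⟪g x, v⟫_ℝ = ⟪g (x + t • v) - g x, v⟫_ℝ := by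
      rw [inner_sub_left]
    have h2 : ⟪g (x + t • v) - g x, v⟫_ℝ ≤ ‖g (x + t • v) - g x‖ * ‖v‖ :=
      real_inner_le_norm _ _
    have h3 : ‖g (x + t • v) - g x‖ ≤ (L : ℝ) * ‖t • v‖ := by
      have := hlip.dist_le_mul (x + t • v) x
      simpa [dist_eq_norm] using this
    have h4 : ‖t • v‖ = t * ‖v‖ := by
      rw [norm_smul, Real.norm_eq_abs, abs_of_nonneg ht.1]
    have h5 : ‖g (x + t • v) - g x‖ * ‖v‖ ≤ ((L : ℝ) * ‖t • v‖) * ‖v‖ :=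
      mul_le_mul_of_nonneg_right h3 (norm_nonneg v)
    have h6 : ((L : ℝ) * ‖t • v‖) * ‖v‖ = (L : ℝ) * ‖v‖ ^ 2 * t := by rw [h4]; ring
    linarith
  have hint : ∫ t in (0:ℝ)..1, ⟪g (x + t • v), v⟫_ℝ ≤
      ∫ t in (0:ℝ)..1, (⟪g x, v⟫_ℝ + (L : ℝ) * ‖v‖ ^ 2 * t) := by
    apply intervalIntegral.integral_mono_on (by norm_num)
      (hderiv_cont.intervalIntegrable 0 1)
      ((continuous_const.add (continuous_const.mul continuous_id)).intervalIntegrable 0 1)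
    intro t ht
    exact hbound t ht
  have hval : ∫ t in (0:ℝ)..1, (⟪g x, v⟫_ℝ + (L : ℝ) * ‖v‖ ^ 2 * t) =
      ⟪g x, v⟫_ℝ + (L : ℝ) * ‖v‖ ^ 2 / 2 := by
    have I1 : IntervalIntegrable (fun t : ℝ => (L : ℝ) * ‖v‖ ^ 2 * t)
        MeasureTheory.volume 0 1 := (continuous_const.mul continuous_id).intervalIntegrable 0 1
    have hid : (∫ t in (0:ℝ)..1, t) = 1 / 2 := by
      rw [integral_id]; norm_num
    rw [intervalIntegral.integral_add intervalIntegrable_const I1,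
      intervalIntegral.integral_const, intervalIntegral.integral_const_mul, hid,
      sub_zero, one_smul]
    ring
  have := hFTC'.le.trans (hint.trans hval.le)
  linarith

/-- Variational inequality for the projection. -/
theorem my_proj_vi {C : Set E} (hCconv : Convex ℝ C)
    {P : E → E} (hP : ∀ z, P z ∈ C ∧ ∀ w ∈ C, ‖z - P z‖ ≤ ‖z - w‖) (z : E) :
    ∀ w ∈ C, ⟪z - P z, w - P z⟫_ℝ ≤ 0 := by
  have hmem := (hP z).1
  haveI : Nonempty ↥C := ⟨⟨P z, hmem⟩⟩
  apply (norm_eq_iInf_iff_real_inner_le_zero hCconv hmem).1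
  have hle : (⨅ w : C, ‖z - (w : E)‖) ≤ ‖z - P z‖ :=
    ciInf_le ⟨0, by rintro r ⟨w, rfl⟩; exact norm_nonneg _⟩ (⟨P z, hmem⟩ : C)
  exact le_antisymm (le_ciInf fun w => (hP z).2 w w.2) hle

/-- The projection is nonexpansive. -/
theorem my_proj_lip {C : Set E} (hCconv : Convex ℝ C)
    {P : E → E} (hP : ∀ z, P z ∈ C ∧ ∀ w ∈ C, ‖z - P z‖ ≤ ‖z - w‖) :
    LipschitzWith 1 P := by
  apply LipschitzWith.of_dist_le_mul
  intro a b
  rw [dist_eq_norm, dist_eq_norm, NNReal.coe_one, one_mul]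
  have h1 := my_proj_vi hCconv hP a (P b) (hP b).1
  have h2 := my_proj_vi hCconv hP b (P a) (hP a).1
  have key : ‖P a - P b‖ ^ 2 ≤ ⟪a - b, P a - P b⟫_ℝ := by
    have e1 : ⟪a - P a, P b - P a⟫_ℝ ≤ 0 := h1
    have e2 : ⟪b - P b, P a - P b⟫_ℝ ≤ 0 := h2
    have : ⟪(a - b) - (P a - P b), P a - P b⟫_ℝ ≥ 0 := by
      have : (a - b) - (P a - P b) = (a - P a) - (b - P b) := by abel
      rw [this, inner_sub_left]
      have e1' : ⟪a - P a, P a - P b⟫_ℝ ≥ 0 := by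
        have : P a - P b = -(P b - P a) := by abel
        rw [this, inner_neg_right]; linarith
      linarith
    rw [inner_sub_left, real_inner_self_eq_norm_sq] at this
    linarith
  have h3 : ⟪a - b, P a - P b⟫_ℝ ≤ ‖a - b‖ * ‖P a - P b‖ := real_inner_le_norm _ _
  rcases eq_or_lt_of_le (norm_nonneg (P a - P b)) with h | h
  · rw [← h]; exact norm_nonneg _
  · nlinarith

/-- For projected gradient descent on an `L`-smooth function over a nonempty compact
convex set `C` with step size `α ∈ (0, 2/L)`, every accumulation point `xstar` of the
iterates is a fixed point of the projected gradient map: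
`xstar = P (xstar - α • ∇φ(xstar))`. -/
theorem pgd_accumulation_stationary {d : ℕ}
    (φ : EuclideanSpace ℝ (Fin d) → ℝ) (L : ℝ≥0) (hL : 0 < (L : ℝ))
    (hdiff : Differentiable ℝ φ)
    (hlip : LipschitzWith L (gradient φ))
    (C : Set (EuclideanSpace ℝ (Fin d)))
    (hC : C.Nonempty) (hCcompact : IsCompact C) (hCconv : Convex ℝ C)
    (P : EuclideanSpace ℝ (Fin d) → EuclideanSpace ℝ (Fin d))
    (hP : ∀ z, P z ∈ C ∧ ∀ w ∈ C, ‖z - P z‖ ≤ ‖z - w‖)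
    (α : ℝ) (hα : 0 < α) (hα2 : α < 2 / L)
    (x : ℕ → EuclideanSpace ℝ (Fin d)) (hx0 : x 0 ∈ C)
    (hiter : ∀ t, x (t+1) = P (x t - α • gradient φ (x t)))
    (xstar : EuclideanSpace ℝ (Fin d))
    (hacc : MapClusterPt xstar Filter.atTop x) :
    xstar = P (xstar - α • gradient φ xstar) := by
  set g := gradient φ with hg
  -- positive constant c = 1/α - L/2
  have hc : 0 < 1 / α - (L : ℝ) / 2 := by
    have h2 : α * (L : ℝ) < 2 := (lt_div_iff₀ hL).1 hα2
    rw [sub_pos, div_lt_div_iff₀ (by norm_num : (0:ℝ) < 2) hα]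
    linarith
  set c := 1 / α - (L : ℝ) / 2 with hcdef
  -- all iterates stay in C
  have hxC : ∀ t, x t ∈ C := by
    intro t
    induction t with
    | zero => exact hx0
    | succ n _ => rw [hiter n]; exact (hP _).1
  -- sufficient decrease
  have hdec : ∀ t, φ (x (t+1)) ≤ φ (x t) - c * ‖x (t+1) - x t‖ ^ 2 := by
    intro t
    set Δ := x (t+1) - x t with hΔdef
    have hvi := my_proj_vi hCconv hP (x t - α • g (x t)) (x t) (hxC t)
    rw [← hiter t] at hvi
    have hinner : ⟪g (x t), Δ⟫_ℝ ≤ - (1 / α) * ‖Δ‖ ^ 2 := by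
      have e : x t - α • g (x t) - x (t+1) = -Δ - α • g (x t) := by
        rw [hΔdef]; abel
      rw [e] at hvi
      have e2 : x t - x (t+1) = -Δ := by rw [hΔdef]; abel
      rw [e2] at hvi
      rw [inner_sub_left, inner_neg_neg, inner_neg_right, real_inner_smul_left,
        real_inner_self_eq_norm_sq] at hvi
      have : α * ⟪g (x t), Δ⟫_ℝ ≤ -‖Δ‖ ^ 2 := by linarith [real_inner_comm (g (x t)) Δ]
      have goal' : α * ⟪g (x t), Δ⟫_ℝ ≤ α * (-(1 / α) * ‖Δ‖ ^ 2) := by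
        rw [show α * (-(1 / α) * ‖Δ‖ ^ 2) = -‖Δ‖ ^ 2 by field_simp; try ring]
        exact this
      exact le_of_mul_le_mul_left goal' hα
    have hdesc := my_descent φ L hdiff hlip (x t) (x (t+1))
    rw [← hg, ← hΔdef] at hdesc
    have := hdesc.trans (by nlinarith [sq_nonneg ‖Δ‖] :
      φ (x t) + ⟪g (x t), Δ⟫_ℝ + (L : ℝ) / 2 * ‖Δ‖ ^ 2 ≤ φ (x t) - c * ‖Δ‖ ^ 2)
    exact this
  -- φ bounded below on C
  obtain ⟨z₀, hz₀C, hz₀⟩ := hCcompact.exists_isMinOn hC (hdiff.continuous.continuousOn)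
  have hbdd : ∀ t, φ z₀ ≤ φ (x t) := fun t => hz₀ (hxC t)
  -- φ(x t) converges
  have hanti : Antitone fun t => φ (x t) := by
    apply antitone_nat_of_succ_le
    intro n
    have := hdec n
    nlinarith [sq_nonneg ‖x (n+1) - x n‖, hc]
  have hbddB : BddBelow (Set.range fun t => φ (x t)) := ⟨φ z₀, by rintro r ⟨t, rfl⟩; exact hbdd t⟩
  obtain ⟨ℓ, hℓ⟩ : ∃ ℓ, Filter.Tendsto (fun t => φ (x t)) Filter.atTop (nhds ℓ) :=
    ⟨_, tendsto_atTop_ciInf hanti hbddB⟩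
  have hℓ' : Filter.Tendsto (fun t => φ (x (t+1))) Filter.atTop (nhds ℓ) :=
    hℓ.comp (Filter.tendsto_add_atTop_nat 1)
  have hdiff0 : Filter.Tendsto (fun t => φ (x t) - φ (x (t+1))) Filter.atTop (nhds 0) := by
    simpa using hℓ.sub hℓ'
  -- ‖Δ t‖² → 0
  have hsq0 : Filter.Tendsto (fun t => ‖x (t+1) - x t‖ ^ 2) Filter.atTop (nhds 0) := by
    apply squeeze_zero (fun t => sq_nonneg _) (fun t => ?_)
      (by simpa using hdiff0.const_mul c⁻¹)
    have h := hdec t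
    have hc' : 0 < c := hc
    calc ‖x (t+1) - x t‖ ^ 2 = c⁻¹ * (c * ‖x (t+1) - x t‖ ^ 2) := by field_simp
      _ ≤ c⁻¹ * (φ (x t) - φ (x (t+1))) :=
          mul_le_mul_of_nonneg_left (by linarith) (by positivity)
  have hΔ0 : Filter.Tendsto (fun t => x (t+1) - x t) Filter.atTop (nhds 0) := by
    rw [tendsto_zero_iff_norm_tendsto_zero]
    have h := (Real.continuous_sqrt.tendsto 0).comp hsq0
    rw [Real.sqrt_zero] at h
    exact h.congr fun t => Real.sqrt_sq (norm_nonneg _)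
  -- the filter at the cluster point
  set l : Filter ℕ := Filter.atTop ⊓ Filter.comap x (nhds xstar) with hl
  haveI hlne : l.NeBot := by
    rw [← Filter.map_neBot_iff x, Filter.push_pull]
    have : (nhds xstar ⊓ Filter.map x Filter.atTop).NeBot := hacc
    rwa [inf_comm] at this
  have h1 : Filter.Tendsto x l (nhds xstar) :=
    Filter.tendsto_comap.mono_left inf_le_right
  have h2 : Filter.Tendsto (fun t => x (t+1)) l (nhds xstar) := by
    have := (hΔ0.mono_left (inf_le_left : l ≤ Filter.atTop)).add h1
    simpa using this
  have hGcont : Continuous fun z => P (z - α • g z) :=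
    (my_proj_lip hCconv hP).continuous.comp
      (continuous_id.sub (hlip.continuous.const_smul α))
  have h3 : Filter.Tendsto (fun t => P (x t - α • g (x t))) l
      (nhds (P (xstar - α • g xstar))) := (hGcont.tendsto xstar).comp h1
  have h2' : Filter.Tendsto (fun t => x (t+1)) l (nhds (P (xstar - α • g xstar))) := by
    simpa only [← hiter] using h3
  exact tendsto_nhds_unique h2 h2'
end
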